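/- For all (y,p) ∈ (H^{1,1/2}_{0,per}(Q_T))² the following identities hold: B((y,p),(y,p)) = ‖y‖²_{L²(Q_T)} + λ^{-1}‖p‖²_{L²(Q_T)}; B((y,p),(−λ^{-1/2}p, λ^{1/2}y)) = λ^{-1/2}∫_{Q_T} ν|∇p|² dx dt + λ^{1/2}∫_{Q_T} ν|∇y|² dx dt; and B((y,p),(−λ^{-1/2}p^⊥, −λ^{1/2}y^⊥)) = λ^{-1/2}⟨σ∂_t^{1/2}p, ∂_t^{1/2}p⟩ + λ^{1/2}⟨σ∂_t^{1/2}y, ∂_t^{1/2}y⟩. -/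

import Mathlib

open MeasureTheory Real

noncomputable section

/-- Points of `ℝ^d`. -/
abbrev Pt (d : ℕ) := EuclideanSpace ℝ (Fin d)

/-- `L²(Ω)` inner product `⟨f,g⟩_Ω = ∫_Ω f g dx` (`μ` is the Lebesgue measure restricted to `Ω`). -/
def ipS {d : ℕ} (μ : Measure (Pt d)) (f g : Pt d → ℝ) : ℝ := ∫ x, f x * g x ∂μ

/-- Squared `L²(Ω)` norm. -/
def nS2 {d : ℕ} (μ : Measure (Pt d)) (f : Pt d → ℝ) : ℝ := ipS μ f f

/-- `L²(Ω)^d` inner product for vector fields. -/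
def ipV {d : ℕ} (μ : Measure (Pt d)) (f g : Pt d → Pt d) : ℝ := ∫ x, inner ℝ (f x) (g x) ∂μ

/-- Squared `L²(Ω)^d` norm for vector fields. -/
def nV2 {d : ℕ} (μ : Measure (Pt d)) (f : Pt d → Pt d) : ℝ := ipV μ f f

/-- Spatial divergence of a vector field. -/
def divg {d : ℕ} (τ : Pt d → Pt d) (x : Pt d) : ℝ :=
  ∑ i : Fin d, fderiv ℝ (fun y => τ y i) x (EuclideanSpace.single i (1 : ℝ))

/-- A (time-periodic) function on `Q_T = Ω × (0,T)`, identified with its Fourier series in time: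
`v(x,t) = a0 x + ∑_{k≥0} (ac k x) cos((k+1) ω t) + (as k x) sin((k+1) ω t)`.
The index `k : ℕ` corresponds to the mode `k+1`. -/
structure TP (d : ℕ) where
  a0 : Pt d → ℝ
  ac : ℕ → Pt d → ℝ
  as : ℕ → Pt d → ℝ

/-- A vector-field-valued (time-periodic) function on `Q_T` (gradients, fluxes). -/
structure TPV (d : ℕ) where
  a0 : Pt d → Pt d
  ac : ℕ → Pt d → Pt d
  as : ℕ → Pt d → Pt d

namespace TP

variable {d : ℕ}

/-- The orthogonal companion `v^⊥(x,t) = ∑_{k≥1} (−v_k^c sin(kωt) + v_k^s cos(kωt))`. -/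
def perp (v : TP d) : TP d :=
  ⟨0, fun k => v.as k, fun k => -(v.ac k)⟩

/-- Time derivative `∂_t v` in Fourier space. -/
def dt (ω : ℝ) (v : TP d) : TP d :=
  ⟨0, fun k x => ((k : ℝ) + 1) * ω * v.as k x,
      fun k x => -(((k : ℝ) + 1) * ω * v.ac k x)⟩

/-- Multiplication by a spatial weight (e.g. `σ v`). -/
def wmul (σf : Pt d → ℝ) (v : TP d) : TP d :=
  ⟨fun x => σf x * v.a0 x, fun k x => σf x * v.ac k x, fun k x => σf x * v.as k x⟩

def add (u v : TP d) : TP d :=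
  ⟨fun x => u.a0 x + v.a0 x, fun k x => u.ac k x + v.ac k x, fun k x => u.as k x + v.as k x⟩

def sub (u v : TP d) : TP d :=
  ⟨fun x => u.a0 x - v.a0 x, fun k x => u.ac k x - v.ac k x, fun k x => u.as k x - v.as k x⟩

def smul (c : ℝ) (v : TP d) : TP d :=
  ⟨fun x => c * v.a0 x, fun k x => c * v.ac k x, fun k x => c * v.as k x⟩

/-- Spatial gradient, applied coefficientwise. -/
def grad (v : TP d) : TPV d :=
  ⟨gradient v.a0, fun k => gradient (v.ac k), fun k => gradient (v.as k)⟩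

/-- `v` is multiharmonic of order `N`: all Fourier modes `> N` vanish. -/
def MH (v : TP d) (N : ℕ) : Prop := ∀ k, N ≤ k → v.ac k = 0 ∧ v.as k = 0

/-- All Fourier coefficients vanish `μ`-a.e. -/
def AEZero (μ : Measure (Pt d)) (v : TP d) : Prop :=
  v.a0 =ᵐ[μ] 0 ∧ (∀ k, v.ac k =ᵐ[μ] 0) ∧ (∀ k, v.as k =ᵐ[μ] 0)

/-- Equality of all Fourier coefficients `μ`-a.e. -/
def AEEq (μ : Measure (Pt d)) (u v : TP d) : Prop :=
  u.a0 =ᵐ[μ] v.a0 ∧ (∀ k, u.ac k =ᵐ[μ] v.ac k) ∧ (∀ k, u.as k =ᵐ[μ] v.as k)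

end TP

namespace TPV

variable {d : ℕ}

def add (u v : TPV d) : TPV d :=
  ⟨fun x => u.a0 x + v.a0 x, fun k x => u.ac k x + v.ac k x, fun k x => u.as k x + v.as k x⟩

def sub (u v : TPV d) : TPV d :=
  ⟨fun x => u.a0 x - v.a0 x, fun k x => u.ac k x - v.ac k x, fun k x => u.as k x - v.as k x⟩

def smul (c : ℝ) (v : TPV d) : TPV d :=
  ⟨fun x => c • v.a0 x, fun k x => c • v.ac k x, fun k x => c • v.as k x⟩

/-- Multiplication by a spatial scalar weight (e.g. `ν ∇y`). -/
def wmul (νf : Pt d → ℝ) (v : TPV d) : TPV d :=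
  ⟨fun x => νf x • v.a0 x, fun k x => νf x • v.ac k x, fun k x => νf x • v.as k x⟩

/-- Spatial divergence, applied coefficientwise. -/
def div (τ : TPV d) : TP d :=
  ⟨divg τ.a0, fun k => divg (τ.ac k), fun k => divg (τ.as k)⟩

/-- Multiharmonic of order `N`. -/
def MH (τ : TPV d) (N : ℕ) : Prop := ∀ k, N ≤ k → τ.ac k = 0 ∧ τ.as k = 0

def AEZero (μ : Measure (Pt d)) (τ : TPV d) : Prop :=
  τ.a0 =ᵐ[μ] 0 ∧ (∀ k, τ.ac k =ᵐ[μ] 0) ∧ (∀ k, τ.as k =ᵐ[μ] 0)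

def AEEq (μ : Measure (Pt d)) (τ ρ : TPV d) : Prop :=
  τ.a0 =ᵐ[μ] ρ.a0 ∧ (∀ k, τ.ac k =ᵐ[μ] ρ.ac k) ∧ (∀ k, τ.as k =ᵐ[μ] ρ.as k)

end TPV

/-- The `L²(Q_T)` inner product `∫_{Q_T} u w dx dt`, expressed via Parseval's identity
(the identification of `u, w` with their Fourier series in time). -/
def ipQ {d : ℕ} (μ : Measure (Pt d)) (T : ℝ) (u w : TP d) : ℝ :=
  T * ipS μ u.a0 w.a0 +
    (T / 2) * ∑' k : ℕ, (ipS μ (u.ac k) (w.ac k) + ipS μ (u.as k) (w.as k))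

/-- Squared `L²(Q_T)` norm. -/
def nQ2 {d : ℕ} (μ : Measure (Pt d)) (T : ℝ) (u : TP d) : ℝ := ipQ μ T u u

/-- The `L²(Q_T)^d` inner product for vector-field-valued functions. -/
def ipQV {d : ℕ} (μ : Measure (Pt d)) (T : ℝ) (u w : TPV d) : ℝ :=
  T * ipV μ u.a0 w.a0 +
    (T / 2) * ∑' k : ℕ, (ipV μ (u.ac k) (w.ac k) + ipV μ (u.as k) (w.as k))

/-- Squared `L²(Q_T)^d` norm. -/
def nQ2V {d : ℕ} (μ : Measure (Pt d)) (T : ℝ) (u : TPV d) : ℝ := ipQV μ T u u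

/-- `⟨σ ∂_t^{1/2} u, ∂_t^{1/2} w⟩ := (T/2) ∑_{k≥1} kω ⟨σ u_k, w_k⟩_Ω`. -/
def ipHalf {d : ℕ} (μ : Measure (Pt d)) (T ω : ℝ) (σf : Pt d → ℝ) (u w : TP d) : ℝ :=
  (T / 2) * ∑' k : ℕ, (((k : ℝ) + 1) * ω) *
    (ipS μ (fun x => σf x * u.ac k x) (w.ac k) + ipS μ (fun x => σf x * u.as k x) (w.as k))

/-- The squared half time-derivative seminorm `‖∂_t^{1/2} u‖² = (T/2) ∑_{k≥1} kω ‖u_k‖²_Ω`. -/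
def halfSemi2 {d : ℕ} (μ : Measure (Pt d)) (T ω : ℝ) (u : TP d) : ℝ :=
  (T / 2) * ∑' k : ℕ, (((k : ℝ) + 1) * ω) * (nS2 μ (u.ac k) + nS2 μ (u.as k))

/-- Squared seminorm `|u|²_{1,1/2} = ‖∇u‖²_{L²(Q_T)} + ‖∂_t^{1/2}u‖²`. -/
def semi112 {d : ℕ} (μ : Measure (Pt d)) (T ω : ℝ) (u : TP d) : ℝ :=
  nQ2V μ T u.grad + halfSemi2 μ T ω u

/-- Squared norm `‖u‖²_{1,1/2} = ‖u‖²_{L²(Q_T)} + |u|²_{1,1/2}`. -/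
def norm112 {d : ℕ} (μ : Measure (Pt d)) (T ω : ℝ) (u : TP d) : ℝ :=
  nQ2 μ T u + semi112 μ T ω u

/-- Membership in `L²(Q_T)`. -/
def InL2Q {d : ℕ} (μ : Measure (Pt d)) (v : TP d) : Prop :=
  MemLp v.a0 2 μ ∧ (∀ k, MemLp (v.ac k) 2 μ) ∧ (∀ k, MemLp (v.as k) 2 μ) ∧
    Summable fun k : ℕ => nS2 μ (v.ac k) + nS2 μ (v.as k)

/-- Membership in `H^{0,1/2}_{per}(Q_T)`. -/
def InH0half {d : ℕ} (μ : Measure (Pt d)) (ω : ℝ) (v : TP d) : Prop :=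
  InL2Q μ v ∧ Summable fun k : ℕ => (((k : ℝ) + 1) * ω) * (nS2 μ (v.ac k) + nS2 μ (v.as k))

/-- Membership in `H^{0,1}_{per}(Q_T)` (the periodicity `v(·,0) = v(·,T)` is encoded in the
Fourier representation). -/
def InH01 {d : ℕ} (μ : Measure (Pt d)) (ω : ℝ) (v : TP d) : Prop :=
  InL2Q μ v ∧ InL2Q μ (v.dt ω)

/-- Membership in `H¹₀(Ω)` for a spatial function: square integrable, with square-integrable
gradient, vanishing outside `Ω`. -/
def InH10 {d : ℕ} (Ωs : Set (Pt d)) (μ : Measure (Pt d)) (f : Pt d → ℝ) : Prop :=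
  MemLp f 2 μ ∧ Differentiable ℝ f ∧ MemLp (gradient f) 2 μ ∧ ∀ x ∉ Ωs, f x = 0

/-- Membership in `H^{1,1/2}_{per}(Q_T)` (no boundary condition). -/
def InH1halfPer {d : ℕ} (μ : Measure (Pt d)) (ω : ℝ) (v : TP d) : Prop :=
  InL2Q μ v ∧ Differentiable ℝ v.a0 ∧ (∀ k, Differentiable ℝ (v.ac k)) ∧
    (∀ k, Differentiable ℝ (v.as k)) ∧ MemLp (gradient v.a0) 2 μ ∧
    (∀ k, MemLp (gradient (v.ac k)) 2 μ) ∧ (∀ k, MemLp (gradient (v.as k)) 2 μ) ∧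
    (Summable fun k : ℕ => nV2 μ (gradient (v.ac k)) + nV2 μ (gradient (v.as k))) ∧
    Summable fun k : ℕ => (((k : ℝ) + 1) * ω) * (nS2 μ (v.ac k) + nS2 μ (v.as k))

/-- Membership in `H^{1,1/2}_{0,per}(Q_T)`. -/
def InH1half {d : ℕ} (Ωs : Set (Pt d)) (μ : Measure (Pt d)) (ω : ℝ) (v : TP d) : Prop :=
  InL2Q μ v ∧ InH10 Ωs μ v.a0 ∧ (∀ k, InH10 Ωs μ (v.ac k)) ∧ (∀ k, InH10 Ωs μ (v.as k)) ∧
    (Summable fun k : ℕ => nV2 μ (gradient (v.ac k)) + nV2 μ (gradient (v.as k))) ∧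
    Summable fun k : ℕ => (((k : ℝ) + 1) * ω) * (nS2 μ (v.ac k) + nS2 μ (v.as k))

/-- Membership in `H^{1,1}_{0,per}(Q_T)`. -/
def InH11 {d : ℕ} (Ωs : Set (Pt d)) (μ : Measure (Pt d)) (ω : ℝ) (v : TP d) : Prop :=
  InH1half Ωs μ ω v ∧ InL2Q μ (v.dt ω)

/-- Membership in `H(div, Q_T)`. -/
def InHdiv {d : ℕ} (μ : Measure (Pt d)) (τ : TPV d) : Prop :=
  MemLp τ.a0 2 μ ∧ (∀ k, MemLp (τ.ac k) 2 μ) ∧ (∀ k, MemLp (τ.as k) 2 μ) ∧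
    (∀ i, Differentiable ℝ fun x => τ.a0 x i) ∧
    (∀ k i, Differentiable ℝ fun x => τ.ac k x i) ∧
    (∀ k i, Differentiable ℝ fun x => τ.as k x i) ∧
    MemLp (divg τ.a0) 2 μ ∧ (∀ k, MemLp (divg (τ.ac k)) 2 μ) ∧
    (∀ k, MemLp (divg (τ.as k)) 2 μ) ∧
    (Summable fun k : ℕ => nV2 μ (τ.ac k) + nV2 μ (τ.as k)) ∧
    Summable fun k : ℕ => nS2 μ (divg (τ.ac k)) + nS2 μ (divg (τ.as k))

/-- The bilinear form `B((y,p),(z,q))` of the reduced optimality system. -/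
def Bform {d : ℕ} (μ : Measure (Pt d)) (T ω : ℝ) (σf νf : Pt d → ℝ) (lam : ℝ)
    (y p z q : TP d) : ℝ :=
  ipQ μ T y z - ipQV μ T (TPV.wmul νf p.grad) z.grad + ipHalf μ T ω σf p z.perp +
    ipQV μ T (TPV.wmul νf y.grad) q.grad + ipHalf μ T ω σf y q.perp + lam⁻¹ * ipQ μ T p q

/-- `(y,p)` is the weak solution of the reduced optimality system with desired state `y_d`. -/
def SolvesOptSys {d : ℕ} (Ωs : Set (Pt d)) (μ : Measure (Pt d)) (T ω : ℝ)
    (σf νf : Pt d → ℝ) (lam : ℝ) (yd y p : TP d) : Prop :=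
  InH1half Ωs μ ω y ∧ InH1half Ωs μ ω p ∧
    ∀ z q : TP d, InH1half Ωs μ ω z → InH1half Ωs μ ω q →
      Bform μ T ω σf νf lam y p z q = ipQ μ T yd z

/-- `y` is the weak solution of the time-periodic state equation
`σ ∂_t y − div(ν ∇y) = v`, `y = 0` on `Σ_T`, `y(·,0) = y(·,T)`. -/
def SolvesState {d : ℕ} (Ωs : Set (Pt d)) (μ : Measure (Pt d)) (T ω : ℝ)
    (σf νf : Pt d → ℝ) (v y : TP d) : Prop :=
  InH1half Ωs μ ω y ∧
    ∀ z : TP d, InH1half Ωs μ ω z →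
      ipQV μ T (TPV.wmul νf y.grad) z.grad + ipHalf μ T ω σf y z.perp = ipQ μ T v z

/-- Residual `R₁(η,ζ,τ) = σ ∂_t η + λ⁻¹ ζ − div τ`. -/
def R1 {d : ℕ} (ω : ℝ) (σf : Pt d → ℝ) (lam : ℝ) (η ζ : TP d) (τ : TPV d) : TP d :=
  (((η.dt ω).wmul σf).add (ζ.smul lam⁻¹)).sub τ.div

/-- Residual `R₂(η,τ) = τ − ν ∇η`. -/
def R2 {d : ℕ} (νf : Pt d → ℝ) (η : TP d) (τ : TPV d) : TPV d :=
  τ.sub (TPV.wmul νf η.grad)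

/-- Residual `R₃(η,ζ,ρ) = σ ∂_t ζ + η − div ρ − y_d`. -/
def R3 {d : ℕ} (ω : ℝ) (σf : Pt d → ℝ) (η ζ : TP d) (ρ : TPV d) (yd : TP d) : TP d :=
  ((((ζ.dt ω).wmul σf).add η).sub ρ.div).sub yd

/-- Residual `R₄(ζ,ρ) = ρ + ν ∇ζ`. -/
def R4 {d : ℕ} (νf : Pt d → ℝ) (ζ : TP d) (ρ : TPV d) : TPV d :=
  ρ.add (TPV.wmul νf ζ.grad)

/-- The cost functional `J(y,v) = ½‖y − y_d‖² + (λ/2)‖v‖²`. -/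
def costJ {d : ℕ} (μ : Measure (Pt d)) (T lam : ℝ) (yd y v : TP d) : ℝ :=
  (1 / 2) * nQ2 μ T (y.sub yd) + (lam / 2) * nQ2 μ T v

/-- The majorant `J⊕(α,β;η,τ,v)` of the cost functional. -/
def Jmaj {d : ℕ} (μ : Measure (Pt d)) (T ω : ℝ) (σf νf : Pt d → ℝ) (lam CF mu1 : ℝ)
    (yd : TP d) (α β : ℝ) (η : TP d) (τ : TPV d) (v : TP d) : ℝ :=
  ((1 + α) / 2) * nQ2 μ T (η.sub yd) +
    ((1 + α) * (1 + β) * CF ^ 2 / (2 * α * mu1 ^ 2)) * nQ2V μ T (τ.sub (TPV.wmul νf η.grad)) +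
    ((1 + α) * (1 + β) * CF ^ 4 / (2 * α * β * mu1 ^ 2)) *
      nQ2 μ T ((((η.dt ω).wmul σf).sub τ.div).sub v) +
    (lam / 2) * nQ2 μ T v



section StatementFiveHelpers

variable {d : ℕ} (μ : Measure (Pt d)) (T ω : ℝ)

private lemma int_rw5 {f g : Pt d → ℝ} (h : ∀ x, f x = g x) :
    ∫ x, f x ∂μ = ∫ x, g x ∂μ :=
  integral_congr_ae (Filter.Eventually.of_forall h)

private lemma int_mul_rw5 {f g : Pt d → ℝ} (c : ℝ) (h : ∀ x, f x = c * g x) :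
    ∫ x, f x ∂μ = c * ∫ x, g x ∂μ := by
  rw [int_rw5 μ h, MeasureTheory.integral_const_mul]

private lemma tsum_rw5 {A B : ℕ → ℝ} (c : ℝ) (h : ∀ k, A k = c * B k) :
    ∑' k, A k = c * ∑' k, B k := by
  rw [tsum_congr h, tsum_mul_left]

private lemma gradient_const_mul5 {f : Pt d → ℝ} (hf : Differentiable ℝ f) (c : ℝ)
    (x : Pt d) : gradient (fun y => c * f y) x = c • gradient f x := by
  unfold gradient
  rw [show (fun y => c * f y) = fun y => c • f y from rfl]
  rw [fderiv_fun_const_smul (hf x) c, _root_.map_smul]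

private lemma ipS_comm5 (f g : Pt d → ℝ) : ipS μ f g = ipS μ g f := by
  unfold ipS; exact int_rw5 μ fun x => mul_comm _ _

private lemma ipS_wmul_comm5 (σf f g : Pt d → ℝ) :
    ipS μ (fun x => σf x * f x) g = ipS μ (fun x => σf x * g x) f := by
  unfold ipS; exact int_rw5 μ fun x => by ring

private lemma ipS_mulc5 {G g : Pt d → ℝ} (f : Pt d → ℝ) (c : ℝ) (h : ∀ x, G x = c * g x) :
    ipS μ f G = c * ipS μ f g := by
  unfold ipS; exact int_mul_rw5 μ c fun x => by rw [h x]; ring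

private lemma ipS_zero5 (f : Pt d → ℝ) : ipS μ f (0 : Pt d → ℝ) = 0 := by
  unfold ipS; simp

private lemma ipV_wmul_comm5 (νf : Pt d → ℝ) (f g : Pt d → Pt d) :
    ipV μ (fun x => νf x • f x) g = ipV μ (fun x => νf x • g x) f := by
  unfold ipV
  refine int_rw5 μ fun x => ?_
  rw [real_inner_smul_left, real_inner_smul_left, real_inner_comm]

private lemma ipV_mulc5 {G g : Pt d → Pt d} (f : Pt d → Pt d) (c : ℝ)
    (h : ∀ x, G x = c • g x) : ipV μ f G = c * ipV μ f g := by
  unfold ipV; exact int_mul_rw5 μ c fun x => by rw [h x, real_inner_smul_right]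

/-- symmetry of the ν-weighted gradient pairing -/
private lemma ipQV_wmul_symm5 (νf : Pt d → ℝ) (τ ρ : TPV d) :
    ipQV μ T (TPV.wmul νf τ) ρ = ipQV μ T (TPV.wmul νf ρ) τ := by
  unfold ipQV TPV.wmul
  rw [ipV_wmul_comm5 μ νf τ.a0 ρ.a0,
    tsum_congr fun k => by
      rw [ipV_wmul_comm5 μ νf (τ.ac k) (ρ.ac k), ipV_wmul_comm5 μ νf (τ.as k) (ρ.as k)]]

private lemma ipQ_comm5 (u w : TP d) : ipQ μ T u w = ipQ μ T w u := by
  unfold ipQ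
  rw [ipS_comm5 μ u.a0 w.a0,
    tsum_congr fun k => by
      rw [ipS_comm5 μ (u.ac k) (w.ac k), ipS_comm5 μ (u.as k) (w.as k)]]

private lemma ipQ_smul_right5 (c : ℝ) (u w : TP d) :
    ipQ μ T u (TP.smul c w) = c * ipQ μ T u w := by
  unfold ipQ TP.smul
  have h0 : ipS μ u.a0 (fun x => c * w.a0 x) = c * ipS μ u.a0 w.a0 :=
    ipS_mulc5 μ u.a0 c fun x => rfl
  have hk : ∀ k : ℕ,
      ipS μ (u.ac k) (fun x => c * w.ac k x) + ipS μ (u.as k) (fun x => c * w.as k x) =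
        c * (ipS μ (u.ac k) (w.ac k) + ipS μ (u.as k) (w.as k)) := by
    intro k
    rw [ipS_mulc5 μ (u.ac k) c (g := w.ac k) fun x => rfl,
      ipS_mulc5 μ (u.as k) c (g := w.as k) fun x => rfl]
    ring
  rw [h0, tsum_rw5 c hk]
  ring

private lemma ipQ_perp_anti5 (u v : TP d) :
    ipQ μ T u (TP.perp v) = - ipQ μ T v (TP.perp u) := by
  unfold ipQ TP.perp
  have hk : ∀ k : ℕ,
      ipS μ (u.ac k) (v.as k) + ipS μ (u.as k) (-(v.ac k)) =
        (-1 : ℝ) * (ipS μ (v.ac k) (u.as k) + ipS μ (v.as k) (-(u.ac k))) := by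
    intro k
    rw [ipS_mulc5 μ (u.as k) (-1 : ℝ) (g := v.ac k) fun x => by
        rw [Pi.neg_apply]; ring,
      ipS_mulc5 μ (v.as k) (-1 : ℝ) (g := u.ac k) fun x => by
        rw [Pi.neg_apply]; ring,
      ipS_comm5 μ (v.ac k) (u.as k), ipS_comm5 μ (v.as k) (u.ac k),
      ipS_comm5 μ (u.ac k) (v.as k)]
    ring
  rw [ipS_zero5 μ u.a0, ipS_zero5 μ v.a0, tsum_rw5 (-1 : ℝ) hk]
  ring

/-- `ipQV ρ ((c•w).grad) = c * ipQV ρ w.grad` for differentiable coefficients. -/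
private lemma ipQV_grad_smul5 (ρ : TPV d) (c : ℝ) (w : TP d)
    (h0 : Differentiable ℝ w.a0) (hc : ∀ k, Differentiable ℝ (w.ac k))
    (hs : ∀ k, Differentiable ℝ (w.as k)) :
    ipQV μ T ρ (TP.grad (TP.smul c w)) = c * ipQV μ T ρ (TP.grad w) := by
  unfold ipQV TP.grad TP.smul
  have e0 : ipV μ ρ.a0 (gradient fun x => c * w.a0 x) = c * ipV μ ρ.a0 (gradient w.a0) :=
    ipV_mulc5 μ ρ.a0 c fun x => gradient_const_mul5 h0 c x
  have hk : ∀ k : ℕ,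
      ipV μ (ρ.ac k) (gradient fun x => c * w.ac k x) +
        ipV μ (ρ.as k) (gradient fun x => c * w.as k x) =
      c * (ipV μ (ρ.ac k) (gradient (w.ac k)) + ipV μ (ρ.as k) (gradient (w.as k))) := by
    intro k
    rw [ipV_mulc5 μ (ρ.ac k) c (g := gradient (w.ac k)) fun x =>
        gradient_const_mul5 (hc k) c x,
      ipV_mulc5 μ (ρ.as k) c (g := gradient (w.as k)) fun x =>
        gradient_const_mul5 (hs k) c x]
    ring
  rw [e0, tsum_rw5 c hk]
  ring

/-- the weighted-gradient pairing of `u` against `(c • u^⊥)` vanishes. -/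
private lemma ipQV_grad_perp5 (νf : Pt d → ℝ) (u : TP d) (c : ℝ)
    (hc : ∀ k, Differentiable ℝ (u.ac k)) (hs : ∀ k, Differentiable ℝ (u.as k)) :
    ipQV μ T (TPV.wmul νf (TP.grad u)) (TP.grad (TP.smul c (TP.perp u))) = 0 := by
  unfold ipQV TPV.wmul TP.grad TP.smul TP.perp
  have ha0 : gradient (fun x : Pt d => c * (0 : Pt d → ℝ) x) = fun _ => (0 : Pt d) := by
    funext x
    rw [show (fun x : Pt d => c * (0 : Pt d → ℝ) x) = fun _ : Pt d => (0 : ℝ) by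
      funext x; simp]
    unfold gradient
    rw [fderiv_fun_const]
    simp
  have h1 : ipV μ (fun x => νf x • gradient u.a0 x)
      (gradient fun x => c * (0 : Pt d → ℝ) x) = 0 := by
    unfold ipV
    rw [int_rw5 μ (g := fun _ => (0:ℝ)) fun x => by rw [ha0]; exact inner_zero_right _]
    simp
  have h2 : ∀ k : ℕ, ipV μ (fun x => νf x • gradient (u.ac k) x)
        (gradient fun x => c * u.as k x) +
      ipV μ (fun x => νf x • gradient (u.as k) x)
        (gradient fun x => c * (-(u.ac k)) x) = 0 := by
    intro k
    have e1 : ipV μ (fun x => νf x • gradient (u.ac k) x)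
        (gradient fun x => c * u.as k x) =
        c * ipV μ (fun x => νf x • gradient (u.ac k) x) (gradient (u.as k)) :=
      ipV_mulc5 μ _ c fun x => gradient_const_mul5 (hs k) c x
    have e2 : ipV μ (fun x => νf x • gradient (u.as k) x)
        (gradient fun x => c * (-(u.ac k)) x) =
        (-c) * ipV μ (fun x => νf x • gradient (u.as k) x) (gradient (u.ac k)) := by
      refine ipV_mulc5 μ _ (-c) fun x => ?_
      rw [show (fun x => c * (-(u.ac k)) x) = fun x => (-c) * u.ac k x by
        funext x; rw [Pi.neg_apply]; ring]
      exact gradient_const_mul5 (hc k) (-c) x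
    have e3 : ipV μ (fun x => νf x • gradient (u.as k) x) (gradient (u.ac k)) =
        ipV μ (fun x => νf x • gradient (u.ac k) x) (gradient (u.as k)) :=
      ipV_wmul_comm5 μ νf _ _
    rw [e1, e2, e3]; ring
  rw [h1, tsum_congr h2]
  simp

/-- antisymmetry of `ipHalf` against `perp`. -/
private lemma ipHalf_perp_anti5 (σf : Pt d → ℝ) (u w : TP d) :
    ipHalf μ T ω σf u (TP.perp w) = - ipHalf μ T ω σf w (TP.perp u) := by
  unfold ipHalf TP.perp
  have hk : ∀ k : ℕ, (((k : ℝ) + 1) * ω) *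
        (ipS μ (fun x => σf x * u.ac k x) (w.as k) +
          ipS μ (fun x => σf x * u.as k x) (-(w.ac k))) =
      (-1 : ℝ) * ((((k : ℝ) + 1) * ω) *
        (ipS μ (fun x => σf x * w.ac k x) (u.as k) +
          ipS μ (fun x => σf x * w.as k x) (-(u.ac k)))) := by
    intro k
    rw [ipS_mulc5 μ (fun x => σf x * u.as k x) (-1 : ℝ) (g := w.ac k) fun x => by
        rw [Pi.neg_apply]; ring,
      ipS_mulc5 μ (fun x => σf x * w.as k x) (-1 : ℝ) (g := u.ac k) fun x => by
        rw [Pi.neg_apply]; ring,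
      ipS_wmul_comm5 μ σf (w.ac k) (u.as k), ipS_wmul_comm5 μ σf (w.as k) (u.ac k),
      ipS_wmul_comm5 μ σf (u.ac k) (w.as k)]
    ring
  rw [tsum_rw5 (-1 : ℝ) hk]
  ring

private lemma ipHalf_self_perp5 (σf : Pt d → ℝ) (u : TP d) :
    ipHalf μ T ω σf u (TP.perp u) = 0 := by
  have := ipHalf_perp_anti5 μ T ω σf u u
  linarith

private lemma ipHalf_smul_perp5 (σf : Pt d → ℝ) (c : ℝ) (u w : TP d) :
    ipHalf μ T ω σf u (TP.perp (TP.smul c w)) = c * ipHalf μ T ω σf u (TP.perp w) := by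
  unfold ipHalf TP.perp TP.smul
  have hk : ∀ k : ℕ, (((k : ℝ) + 1) * ω) *
        (ipS μ (fun x => σf x * u.ac k x) (fun x => c * w.as k x) +
          ipS μ (fun x => σf x * u.as k x) (-(fun x => c * w.ac k x))) =
      c * ((((k : ℝ) + 1) * ω) *
        (ipS μ (fun x => σf x * u.ac k x) (w.as k) +
          ipS μ (fun x => σf x * u.as k x) (-(w.ac k)))) := by
    intro k
    rw [ipS_mulc5 μ (fun x => σf x * u.ac k x) c (g := w.as k) fun x => rfl,
      ipS_mulc5 μ (fun x => σf x * u.as k x) (-c) (g := w.ac k)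
        (G := -(fun x => c * w.ac k x)) fun x => by rw [Pi.neg_apply]; ring,
      ipS_mulc5 μ (fun x => σf x * u.as k x) (-1 : ℝ) (g := w.ac k)
        (G := -(w.ac k)) fun x => by rw [Pi.neg_apply]; ring]
    ring
  rw [tsum_rw5 c hk]
  ring

private lemma ipHalf_perp_smul_perp5 (σf : Pt d → ℝ) (c : ℝ) (u w : TP d) :
    ipHalf μ T ω σf u (TP.perp (TP.smul c (TP.perp w))) = -c * ipHalf μ T ω σf u w := by
  unfold ipHalf TP.perp TP.smul
  have hk : ∀ k : ℕ, (((k : ℝ) + 1) * ω) *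
        (ipS μ (fun x => σf x * u.ac k x) (fun x => c * (-(w.ac k)) x) +
          ipS μ (fun x => σf x * u.as k x) (-(fun x => c * w.as k x))) =
      (-c) * ((((k : ℝ) + 1) * ω) *
        (ipS μ (fun x => σf x * u.ac k x) (w.ac k) +
          ipS μ (fun x => σf x * u.as k x) (w.as k))) := by
    intro k
    rw [ipS_mulc5 μ (fun x => σf x * u.ac k x) (-c) (g := w.ac k) fun x => by
        rw [Pi.neg_apply]; ring,
      ipS_mulc5 μ (fun x => σf x * u.as k x) (-c) (g := w.as k)
        (G := -(fun x => c * w.as k x)) fun x => by rw [Pi.neg_apply]; ring]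
    ring
  rw [tsum_rw5 (-c) hk]
  ring

end StatementFiveHelpers

/-- the three identities for `B` obtained from the orthogonality relations. -/
theorem statement5
    {d : ℕ} (hd : 1 ≤ d ∧ d ≤ 3)
    (Ωs : Set (Pt d)) (hΩo : IsOpen Ωs) (hΩb : Bornology.IsBounded Ωs)
    (μ : Measure (Pt d)) (hμ : μ = MeasureTheory.volume.restrict Ωs)
    (T ω : ℝ) (hT : 0 < T) (hω : ω = 2 * Real.pi / T)
    (σf : Pt d → ℝ) (sigl sigu : ℝ) (hσm : Measurable σf) (hsigl : 0 < sigl)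
    (hσb : ∀ᵐ x ∂μ, sigl ≤ σf x ∧ σf x ≤ sigu)
    (νf : Pt d → ℝ) (nul nuu : ℝ) (hνm : Measurable νf) (hnul : 0 < nul)
    (hνb : ∀ᵐ x ∂μ, nul ≤ νf x ∧ νf x ≤ nuu)
    (lam : ℝ) (hlam : 0 < lam)
    (y p : TP d) (hy : InH1half Ωs μ ω y) (hp : InH1half Ωs μ ω p) :
    Bform μ T ω σf νf lam y p y p = nQ2 μ T y + lam⁻¹ * nQ2 μ T p ∧
    Bform μ T ω σf νf lam y p (p.smul (-(Real.sqrt lam)⁻¹)) (y.smul (Real.sqrt lam)) =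
        (Real.sqrt lam)⁻¹ * ipQV μ T (TPV.wmul νf p.grad) p.grad +
          Real.sqrt lam * ipQV μ T (TPV.wmul νf y.grad) y.grad ∧
    Bform μ T ω σf νf lam y p (p.perp.smul (-(Real.sqrt lam)⁻¹))
        (y.perp.smul (-(Real.sqrt lam))) =
      (Real.sqrt lam)⁻¹ * ipHalf μ T ω σf p p + Real.sqrt lam * ipHalf μ T ω σf y y := by
  have hsne : Real.sqrt lam ≠ 0 := ne_of_gt (Real.sqrt_pos.2 hlam)
  have hss : Real.sqrt lam * Real.sqrt lam = lam := Real.mul_self_sqrt hlam.le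
  have hlaminv : lam⁻¹ = (Real.sqrt lam)⁻¹ * (Real.sqrt lam)⁻¹ := by
    rw [← mul_inv, hss]
  set s := Real.sqrt lam with hs
  obtain ⟨-, ⟨-, hy0, -, -⟩, hyac, hyas, -, -⟩ := hy
  obtain ⟨-, ⟨-, hp0, -, -⟩, hpac, hpas, -, -⟩ := hp
  have hyacD : ∀ k, Differentiable ℝ (y.ac k) := fun k => (hyac k).2.1
  have hyasD : ∀ k, Differentiable ℝ (y.as k) := fun k => (hyas k).2.1
  have hpacD : ∀ k, Differentiable ℝ (p.ac k) := fun k => (hpac k).2.1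
  have hpasD : ∀ k, Differentiable ℝ (p.as k) := fun k => (hpas k).2.1
  refine ⟨?_, ?_, ?_⟩
  · unfold Bform nQ2
    rw [ipQV_wmul_symm5 μ T νf (TP.grad p) (TP.grad y),
      ipHalf_perp_anti5 μ T ω σf p y]
    ring
  · unfold Bform
    rw [ipQ_smul_right5 μ T (-s⁻¹) y p,
      ipQV_grad_smul5 μ T (TPV.wmul νf (TP.grad p)) (-s⁻¹) p hp0 hpacD hpasD,
      ipQV_grad_smul5 μ T (TPV.wmul νf (TP.grad y)) s y hy0 hyacD hyasD,
      ipHalf_smul_perp5 μ T ω σf (-s⁻¹) p p,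
      ipHalf_smul_perp5 μ T ω σf s y y,
      ipHalf_self_perp5 μ T ω σf p, ipHalf_self_perp5 μ T ω σf y,
      ipQ_smul_right5 μ T s p y, ipQ_comm5 μ T p y, hlaminv]
    field_simp
    ring
  · unfold Bform
    rw [ipQ_smul_right5 μ T (-s⁻¹) y (TP.perp p),
      ipQ_smul_right5 μ T (-s) p (TP.perp y),
      ipQ_perp_anti5 μ T y p,
      ipQV_grad_perp5 μ T νf p (-s⁻¹) hpacD hpasD,
      ipQV_grad_perp5 μ T νf y (-s) hyacD hyasD,
      ipHalf_perp_smul_perp5 μ T ω σf (-s⁻¹) p p,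
      ipHalf_perp_smul_perp5 μ T ω σf (-s) y y, hlaminv]
    field_simp
    ring
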